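/- Let (S, d) be a metric space. Then there exist a real Hilbert space H and an isometric map V : S → H (i.e. ‖V(s) − V(t)‖ = d(s,t) for all s,t ∈ S) if and only if the kernel K(s,t) := −d(s,t)² is conditionally positive definite, i.e. for every n ≥ 2, all s₁,…,sₙ ∈ S and all c₁,…,cₙ ∈ ℝ with ∑_{i=1}^n cᵢ = 0 one has −∑_{i,j=1}^n cᵢ cⱼ d(sᵢ,sⱼ)² ≥ 0. -/

import Mathlib

open Finset UniformSpace

namespace SchoenbergEmbedAux

variable {S : Type*} [MetricSpace S]

/-- The kernel built from a base point. -/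
noncomputable def Kker (o s t : S) : ℝ :=
  (dist s o ^ 2 + dist t o ^ 2 - dist s t ^ 2) / 2

theorem key (h : ∀ (n : ℕ), 2 ≤ n → ∀ (s : Fin n → S) (c : Fin n → ℝ), (∑ i, c i) = 0 →
      0 ≤ -∑ i, ∑ j, c i * c j * dist (s i) (s j) ^ 2)
    (o : S) (n : ℕ) (s : Fin n → S) (c : Fin n → ℝ) :
    0 ≤ ∑ i, ∑ j, c i * c j * Kker o (s i) (s j) := by
  set C := ∑ i, c i with hC
  set A := ∑ i, c i * dist (s i) o ^ 2 with hA
  set Q := ∑ i, ∑ j, c i * c j * dist (s i) (s j) ^ 2 with hQ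
  have e1 : ∑ x, c x * C * dist (s x) o ^ 2 = C * A := by
    rw [hA, Finset.mul_sum]
    exact Finset.sum_congr rfl fun i _ => by ring
  have e2 : ∑ x, C * c x * dist o (s x) ^ 2 = C * A := by
    rw [hA, Finset.mul_sum]
    refine Finset.sum_congr rfl fun i _ => by rw [dist_comm]; ring
  have goal_eq : ∑ i, ∑ j, c i * c j * Kker o (s i) (s j) = (A * C + C * A - Q) / 2 := by
    have inner_eq : ∀ i : Fin n, ∑ j, c i * c j * Kker o (s i) (s j)
        = ((c i * dist (s i) o ^ 2) * C + c i * A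
            - ∑ j, c i * c j * dist (s i) (s j) ^ 2) / 2 := by
      intro i
      rw [Finset.mul_sum, Finset.mul_sum, ← Finset.sum_add_distrib, ← Finset.sum_sub_distrib,
        Finset.sum_div]
      refine Finset.sum_congr rfl fun j _ => ?_
      simp only [Kker]
      ring
    simp only [inner_eq]
    rw [← Finset.sum_div, Finset.sum_sub_distrib, Finset.sum_add_distrib,
      ← Finset.sum_mul, ← Finset.sum_mul, ← hA, ← hQ]
  have H := h (n + 2) (by omega) (Fin.snoc (Fin.snoc s o) o)
      (Fin.snoc (Fin.snoc c (-C)) 0) ?_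
  · have expand : ∑ i : Fin (n+2), ∑ j : Fin (n+2),
        (Fin.snoc (Fin.snoc c (-C)) 0 : Fin (n+2) → ℝ) i *
        (Fin.snoc (Fin.snoc c (-C)) 0 : Fin (n+2) → ℝ) j *
        dist ((Fin.snoc (Fin.snoc s o) o : Fin (n+2) → S) i)
             ((Fin.snoc (Fin.snoc s o) o : Fin (n+2) → S) j) ^ 2
        = Q - 2 * (C * A) := by
      simp only [Fin.sum_univ_castSucc, Fin.snoc_castSucc, Fin.snoc_last, dist_self,
        mul_zero, zero_mul, add_zero, zero_add, zero_pow, ne_eq, OfNat.ofNat_ne_zero,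
        not_false_eq_true, mul_neg, neg_mul, Finset.sum_const_zero, neg_zero,
        Finset.sum_add_distrib, Finset.sum_neg_distrib]
      rw [e1, e2, ← hQ]
      ring
    rw [expand] at H
    linarith [H]
  · simp only [Fin.sum_univ_castSucc, Fin.snoc_castSucc, Fin.snoc_last]
    simp [hC]

/-- The semi-inner product on finitely supported functions. -/
noncomputable def iaux (o : S) (f g : S →₀ ℝ) : ℝ :=
  f.sum fun s a => g.sum fun t b => a * b * Kker o s t

theorem iaux_def (o : S) (f g : S →₀ ℝ) :
    iaux o f g = ∑ s ∈ f.support, ∑ t ∈ g.support, f s * g t * Kker o s t := rfl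

theorem iaux_symm (o : S) (f g : S →₀ ℝ) : iaux o f g = iaux o g f := by
  rw [iaux_def, iaux_def, Finset.sum_comm]
  refine Finset.sum_congr rfl fun t _ => Finset.sum_congr rfl fun s _ => ?_
  simp only [Kker]
  rw [dist_comm s t]
  ring

theorem iaux_add_left (o : S) (f g h : S →₀ ℝ) :
    iaux o (f + g) h = iaux o f h + iaux o g h := by
  classical
  unfold iaux
  rw [Finsupp.sum_add_index]
  · intro s _; simp
  · intro s _ a b
    rw [← Finsupp.sum_add]
    exact Finsupp.sum_congr fun t _ => by ring

theorem iaux_smul_left (o : S) (r : ℝ) (f g : S →₀ ℝ) :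
    iaux o (r • f) g = r * iaux o f g := by
  unfold iaux
  rw [Finsupp.sum_smul_index, Finsupp.mul_sum]
  · exact Finsupp.sum_congr fun s _ => by
      rw [Finsupp.mul_sum]
      exact Finsupp.sum_congr fun t _ => by ring
  · intro s; simp

theorem iaux_add_right (o : S) (f g h : S →₀ ℝ) :
    iaux o f (g + h) = iaux o f g + iaux o f h := by
  rw [iaux_symm, iaux_add_left, iaux_symm o g, iaux_symm o h]

theorem iaux_smul_right (o : S) (r : ℝ) (f g : S →₀ ℝ) :
    iaux o f (r • g) = r * iaux o f g := by
  rw [iaux_symm, iaux_smul_left, iaux_symm]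

theorem iaux_single (o : S) (s t : S) (a b : ℝ) :
    iaux o (Finsupp.single s a) (Finsupp.single t b) = a * b * Kker o s t := by
  unfold iaux
  rw [Finsupp.sum_single_index, Finsupp.sum_single_index]
  · simp
  · rw [Finsupp.sum_single_index] <;> simp

theorem iaux_nonneg
    (h : ∀ (n : ℕ), 2 ≤ n → ∀ (s : Fin n → S) (c : Fin n → ℝ), (∑ i, c i) = 0 →
      0 ≤ -∑ i, ∑ j, c i * c j * dist (s i) (s j) ^ 2)
    (o : S) (f : S →₀ ℝ) : 0 ≤ iaux o f f := by
  classical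
  set n := f.support.card with hn
  set e : ↥f.support ≃ Fin n := f.support.equivFin with he
  have eq1 : iaux o f f
      = ∑ i : Fin n, ∑ j : Fin n,
          f ↑(e.symm i) * f ↑(e.symm j) * Kker o ↑(e.symm i) ↑(e.symm j) := by
    rw [iaux_def, ← Finset.sum_coe_sort]
    rw [show (∑ x : ↥f.support, ∑ t ∈ f.support, f ↑x * f t * Kker o ↑x t)
        = ∑ x : ↥f.support, ∑ y : ↥f.support, f ↑x * f ↑y * Kker o ↑x ↑y from
      Finset.sum_congr rfl fun x _ => (Finset.sum_coe_sort _ _).symm]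
    refine Fintype.sum_equiv e _ _ fun x => ?_
    refine (Fintype.sum_equiv e _ _ fun y => ?_)
    simp
  rw [eq1]
  exact key h o n (fun i => ↑(e.symm i)) (fun i => f ↑(e.symm i))

theorem forward {H : Type*} [NormedAddCommGroup H] [InnerProductSpace ℝ H]
    (V : S → H) (hV : ∀ s t, ‖V s - V t‖ = dist s t)
    (n : ℕ) (s : Fin n → S) (c : Fin n → ℝ) (hc : (∑ i, c i) = 0) :
    0 ≤ -∑ i, ∑ j, c i * c j * dist (s i) (s j) ^ 2 := by
  have key : ∑ i, ∑ j, c i * c j * dist (s i) (s j) ^ 2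
      = -2 * ‖∑ i, c i • V (s i)‖ ^ 2 := by
    have expand : ∀ i j, c i * c j * dist (s i) (s j) ^ 2
        = c i * c j * ‖V (s i)‖ ^ 2 + c i * (c j * ‖V (s j)‖ ^ 2)
          - 2 * (c i * c j * inner ℝ (V (s i)) (V (s j)) : ℝ) := by
      intro i j
      rw [← hV, @norm_sub_sq_real]
      ring
    simp only [expand, Finset.sum_sub_distrib, Finset.sum_add_distrib,
      ← Finset.mul_sum, ← Finset.sum_mul]
    rw [hc]
    have hinner : ∑ i, ∑ j, c i * (c j * (inner ℝ (V (s i)) (V (s j)) : ℝ))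
        = ‖∑ i, c i • V (s i)‖ ^ 2 := by
      rw [← real_inner_self_eq_norm_sq, sum_inner]
      refine Finset.sum_congr rfl fun i _ => ?_
      rw [real_inner_smul_left, inner_sum, Finset.mul_sum]
      refine Finset.sum_congr rfl fun j _ => ?_
      rw [real_inner_smul_right]
    simp only [mul_assoc] at hinner ⊢
    rw [← hinner]
    ring_nf
    simp [Finset.sum_const_zero]
  rw [key]
  nlinarith [norm_nonneg (∑ i, c i • V (s i))]

end SchoenbergEmbedAux

open SchoenbergEmbedAux

/-- Schoenberg-type embedding theorem: a metric space `(S, d)` embeds isometrically into a real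
Hilbert space if and only if the kernel `K(s,t) := −d(s,t)²` is conditionally positive definite,
i.e. `−∑ᵢⱼ cᵢ cⱼ d(sᵢ,sⱼ)² ≥ 0` whenever `n ≥ 2` and `∑ᵢ cᵢ = 0`. -/
theorem metric_embeds_iff_neg_dist_sq_condPosDef {S : Type u} [MetricSpace S] :
    (∃ (H : Type u) (_ : NormedAddCommGroup H) (_ : InnerProductSpace ℝ H)
      (_ : CompleteSpace H) (V : S → H), ∀ s t, ‖V s - V t‖ = dist s t) ↔
    (∀ (n : ℕ), 2 ≤ n → ∀ (s : Fin n → S) (c : Fin n → ℝ), (∑ i, c i) = 0 →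
      0 ≤ -∑ i, ∑ j, c i * c j * dist (s i) (s j) ^ 2) := by
  constructor
  · rintro ⟨H, _, _, _, V, hV⟩ n _ s c hc
    exact forward V hV n s c hc
  · intro h
    by_cases hS : Nonempty S
    · obtain ⟨o⟩ := hS
      letI core : PreInnerProductSpace.Core ℝ (S →₀ ℝ) :=
        { inner := iaux o
          conj_inner_symm := fun f g => by simpa using iaux_symm o g f
          re_inner_nonneg := fun f => by simpa using iaux_nonneg h o f
          add_left := iaux_add_left o
          smul_left := fun f g r => by simpa using iaux_smul_left o r f g }
      letI : SeminormedAddCommGroup (S →₀ ℝ) :=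
        @InnerProductSpace.Core.toSeminormedAddCommGroup ℝ (S →₀ ℝ) _ _ _ core
      letI : NormedSpace ℝ (S →₀ ℝ) :=
        @InnerProductSpace.Core.toNormedSpace ℝ (S →₀ ℝ) _ _ _ core
      letI : InnerProductSpace ℝ (S →₀ ℝ) :=
        { toInner := core.toInner
          norm_sq_eq_re_inner := fun x => by
            have hnorm : ‖x‖ = Real.sqrt (iaux o x x) := rfl
            rw [hnorm, Real.sq_sqrt (iaux_nonneg h o x)]
            rfl
          conj_inner_symm := core.conj_inner_symm
          add_left := core.add_left
          smul_left := core.smul_left }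
      refine ⟨Completion (SeparationQuotient (S →₀ ℝ)), inferInstance, inferInstance,
        inferInstance,
        fun s => ((SeparationQuotient.mk (Finsupp.single s (1 : ℝ)) :
          SeparationQuotient (S →₀ ℝ)) : Completion (SeparationQuotient (S →₀ ℝ))),
        fun s t => ?_⟩
      rw [← UniformSpace.Completion.coe_sub, UniformSpace.Completion.norm_coe,
        ← SeparationQuotient.mk_sub, SeparationQuotient.norm_mk]
      have hx : iaux o (Finsupp.single s 1 - Finsupp.single t 1)
          (Finsupp.single s 1 - Finsupp.single t 1) = dist s t ^ 2 := by
        have hsub : (Finsupp.single s 1 - Finsupp.single t 1 : S →₀ ℝ)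
            = Finsupp.single s 1 + (-1 : ℝ) • Finsupp.single t 1 := by
          simp [sub_eq_add_neg]
        rw [hsub, iaux_add_left, iaux_add_right, iaux_add_right]
        simp only [iaux_smul_left, iaux_smul_right, iaux_single]
        simp only [Kker, dist_self]
        rw [dist_comm t s]
        ring
      have hnorm : ‖(Finsupp.single s 1 - Finsupp.single t 1 : S →₀ ℝ)‖
          = Real.sqrt (iaux o (Finsupp.single s 1 - Finsupp.single t 1)
              (Finsupp.single s 1 - Finsupp.single t 1)) := rfl
      rw [hnorm, hx, Real.sqrt_sq dist_nonneg]
    · letI core : PreInnerProductSpace.Core ℝ (S →₀ ℝ) :=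
        { inner := fun _ _ => 0
          conj_inner_symm := fun _ _ => by simp
          re_inner_nonneg := fun _ => by simp
          add_left := fun _ _ _ => by simp
          smul_left := fun _ _ _ => by simp }
      letI : SeminormedAddCommGroup (S →₀ ℝ) :=
        @InnerProductSpace.Core.toSeminormedAddCommGroup ℝ (S →₀ ℝ) _ _ _ core
      letI : NormedSpace ℝ (S →₀ ℝ) :=
        @InnerProductSpace.Core.toNormedSpace ℝ (S →₀ ℝ) _ _ _ core
      letI : InnerProductSpace ℝ (S →₀ ℝ) :=
        { toInner := core.toInner
          norm_sq_eq_re_inner := fun x => by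
            have hnorm : ‖x‖ = Real.sqrt 0 := rfl
            rw [hnorm]
            simp
            rfl
          conj_inner_symm := core.conj_inner_symm
          add_left := core.add_left
          smul_left := core.smul_left }
      exact ⟨Completion (SeparationQuotient (S →₀ ℝ)), inferInstance, inferInstance,
        inferInstance, fun s => (hS ⟨s⟩).elim, fun s t => (hS ⟨s⟩).elim⟩
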